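/- Let X ∈ M₂(ℝ) have entries n₁₁, n₁₂, n₂₁, n₂₂, let A ∈ M₄(ℝ) be the block-diagonal matrix with blocks 0_{2×2} and the 2×2 matrix ((0, −1), (1, 0)), and let N ∈ M₄(ℝ) be the block matrix with upper-left block X, upper-right block −X², lower-left block Id₂, and lower-right block −X. Then the characteristic polynomial of A + N equals x⁴ + (n₁₂ − n₂₁ + 1)x² − (n₁₁ + n₂₂)x + (n₁₁n₂₂ − n₁₂n₂₁). -/

import Mathlib

open Polynomial Matrix

set_option maxHeartbeats 1600000 in
lemma det_fin_four' {R : Type*} [CommRing R] (a b c d e f g h i j k l m n o p : R) :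
    (!![a,b,c,d; e,f,g,h; i,j,k,l; m,n,o,p]).det =
      a*(f*(k*p - l*o) - g*(j*p - l*n) + h*(j*o - k*n))
      - b*(e*(k*p - l*o) - g*(i*p - l*m) + h*(i*o - k*m))
      + c*(e*(j*p - l*n) - f*(i*p - l*m) + h*(i*n - j*m))
      - d*(e*(j*o - k*n) - f*(i*o - k*m) + g*(i*n - j*m)) := by
  simp [Matrix.det_succ_row_zero, Fin.sum_univ_succ, Fin.succAbove]
  ring

lemma charmatrix_fin_four {R : Type*} [CommRing R] (a b c d e f g h i j k l m n o p : R) :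
    charmatrix !![a,b,c,d; e,f,g,h; i,j,k,l; m,n,o,p] =
      !![X - C a, -C b, -C c, -C d;
         -C e, X - C f, -C g, -C h;
         -C i, -C j, X - C k, -C l;
         -C m, -C n, -C o, X - C p] := by
  ext i j
  fin_cases i <;> fin_cases j <;> simp [charmatrix_apply]

set_option maxHeartbeats 1600000 in
theorem charpoly_of_block_perturbation
    (n₁₁ n₁₂ n₂₁ n₂₂ : ℝ)
    (M : Matrix (Fin 2) (Fin 2) ℝ)
    (hM : M = !![n₁₁, n₁₂; n₂₁, n₂₂])
    (A : Matrix (Fin 2 ⊕ Fin 2) (Fin 2 ⊕ Fin 2) ℝ)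
    (hA : A = Matrix.fromBlocks 0 0 0 !![0, -1; 1, 0])
    (N : Matrix (Fin 2 ⊕ Fin 2) (Fin 2 ⊕ Fin 2) ℝ)
    (hN : N = Matrix.fromBlocks M (-(M ^ 2)) 1 (-M)) :
    (A + N).charpoly =
      X ^ 4 + C (n₁₂ - n₂₁ + 1) * X ^ 2 - C (n₁₁ + n₂₂) * X
        + C (n₁₁ * n₂₂ - n₁₂ * n₂₁) := by
  have key : (A + N).charpoly = ((reindex finSumFinEquiv finSumFinEquiv) (A + N)).charpoly :=
    (Matrix.charpoly_reindex finSumFinEquiv _).symm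
  have hB : (reindex finSumFinEquiv finSumFinEquiv) (A + N) =
      !![n₁₁, n₁₂, -(n₁₁*n₁₁ + n₁₂*n₂₁), -(n₁₁*n₁₂ + n₁₂*n₂₂);
         n₂₁, n₂₂, -(n₂₁*n₁₁ + n₂₂*n₂₁), -(n₂₁*n₁₂ + n₂₂*n₂₂);
         1, 0, -n₁₁, -n₁₂ - 1;
         0, 1, -n₂₁ + 1, -n₂₂] := by
    subst hM hA hN
    ext i j
    fin_cases i <;> fin_cases j <;>
      simp [Matrix.mul_apply, Fin.sum_univ_succ, pow_two, finSumFinEquiv,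
        Matrix.one_apply, Fin.addCases, Fin.castLT, Fin.subNat, Fin.lt_def, show ((3:Fin 4):ℕ) = 3 from rfl, show ((2:Fin 4):ℕ) = 2 from rfl] <;> ring
  rw [key, hB, Matrix.charpoly, charmatrix_fin_four, det_fin_four']
  simp only [map_neg, map_add, _root_.map_mul, map_sub, _root_.map_one, map_zero]
  ring
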